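/- Let the penalized cost function c^M be defined by c^M_{ij} = c_{ij} + M if i and j lie in different clusters or one of them is the depot, and c^M_{ij} = c_{ij} otherwise. Then for every feasible CluVRP solution s with m routes and N clusters, the penalized cost satisfies c^M(s) = c(s) + M(m + N), i.e., the penalty contribution is a constant independent of s; hence s minimizes c^M over feasible CluVRP solutions if and only if it minimizes c. -/

import Mathlib

/-- Cost of a walk given as a list of vertices. -/
def pathCost {α : Type*} (c : α → α → ℝ) : List α → ℝ
  | a :: b :: t => c a b + pathCost c (b :: t)
  | _ => 0

/-- Cost of a single closed route based at the depot (`none`). -/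
def routeCost {C : Type*} (c : Option C → Option C → ℝ) (r : List C) : ℝ :=
  pathCost c ((none :: r.map some) ++ [none])

/-- Total cost of a solution. -/
def solCost {C : Type*} {m : ℕ} (c : Option C → Option C → ℝ)
    (routes : Fin m → List C) : ℝ :=
  ∑ i, routeCost c (routes i)

/-- The penalized cost function `c^M`: add `M` on edges whose endpoints lie in
different clusters or one of whose endpoints is the depot. -/
def penalizedCost {C : Type*} {N : ℕ} [DecidableEq C] (clu : C → Fin N)
    (c : Option C → Option C → ℝ) (M : ℝ) (a b : Option C) : ℝ :=
  c a b + (if a = none ∨ b = none ∨ Option.map clu a ≠ Option.map clu b then M else 0)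

/-- Feasibility for the CluVRP with m nonempty routes: every customer visited
exactly once, capacities respected, clusters contiguous. -/
def CluVRPFeasible {C : Type*} {N m : ℕ} (Q : ℚ) (q : C → ℚ) (clu : C → Fin N)
    (routes : Fin m → List C) : Prop :=
  (∀ v : C, ∃! i : Fin m, v ∈ routes i) ∧
  (∀ i, (routes i).Nodup) ∧
  (∀ i, routes i ≠ []) ∧
  (∀ i, ((routes i).map q).sum ≤ Q) ∧
  (∀ k : Fin N, ∃ (i : Fin m) (l₁ l₂ l₃ : List C),
    routes i = l₁ ++ l₂ ++ l₃ ∧ ∀ v, v ∈ l₂ ↔ clu v = k)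

/-- number of adjacent unequal pairs -/
def chg {α : Type*} [DecidableEq α] : List α → ℕ
  | a :: b :: t => (if a = b then 0 else 1) + chg (b :: t)
  | _ => 0

/-- number of penalized edges -/
def pen {C : Type*} {N : ℕ} [DecidableEq C] (clu : C → Fin N) : List (Option C) → ℕ
  | a :: b :: t =>
      (if a = none ∨ b = none ∨ Option.map clu a ≠ Option.map clu b then 1 else 0)
        + pen clu (b :: t)
  | _ => 0

lemma pathCost_pen {C : Type*} {N : ℕ} [DecidableEq C] (clu : C → Fin N)
    (c : Option C → Option C → ℝ) (M : ℝ) :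
    ∀ L, pathCost (penalizedCost clu c M) L = pathCost c L + M * pen clu L
  | [] => by simp [pathCost, pen]
  | [a] => by simp [pathCost, pen]
  | a :: b :: t => by
      have ih := pathCost_pen clu c M (b :: t)
      simp only [pathCost, pen, penalizedCost, ih]
      by_cases h : a = none ∨ b = none ∨ Option.map clu a ≠ Option.map clu b <;>
        simp [h] <;> push_cast <;> ring

lemma pen_inner {C : Type*} {N : ℕ} [DecidableEq C] (clu : C → Fin N) (v : C) :
    ∀ r : List C, pen clu (some v :: r.map some ++ [none])
      = chg (clu v :: r.map clu) + 1
  | [] => by simp [pen, chg]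
  | w :: t => by
      have ih := pen_inner clu w t
      simp only [List.map_cons, List.cons_append] at *
      by_cases h : clu v = clu w <;>
        simp [pen, chg, h, ih] <;> omega

lemma pen_route {C : Type*} {N : ℕ} [DecidableEq C] (clu : C → Fin N) (r : List C)
    (h : r ≠ []) : pen clu ((none :: r.map some) ++ [none]) = chg (r.map clu) + 2 := by
  cases r with
  | nil => exact absurd rfl h
  | cons v t =>
      have := pen_inner clu v t
      simp only [List.map_cons, List.cons_append] at *
      simp [pen, this]
      omega

def Blocky {α : Type*} (xs : List α) : Prop :=
  ∀ a : α, ∃ l₁ l₂ l₃ : List α, xs = l₁ ++ l₂ ++ l₃ ∧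
    (∀ y ∈ l₁, y ≠ a) ∧ (∀ y ∈ l₂, y = a) ∧ (∀ y ∈ l₃, y ≠ a)

lemma chg_const {α : Type*} [DecidableEq α] (a : α) (l₃ : List α) (l₂ : List α)
    (h : ∀ y ∈ l₂, y = a) : chg (a :: (l₂ ++ l₃)) = chg (a :: l₃) := by
  induction l₂ with
  | nil => rfl
  | cons b t ih =>
      have hb : b = a := h b (by simp)
      subst hb
      have := ih (fun y hy => h y (by simp [hy]))
      simpa [chg] using this

lemma blocky_suffix {α : Type*} (a : α) (L2 l₃ : List α)
    (hL2 : ∀ y ∈ L2, y = a) (hl₃ : ∀ y ∈ l₃, y ≠ a)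
    (hB : Blocky (L2 ++ l₃)) : Blocky l₃ := by
  intro k
  by_cases hk : k = a
  · exact ⟨l₃, [], [], by simp, fun y hy => hk ▸ hl₃ y hy, by simp, by simp⟩
  obtain ⟨p₁, p₂, p₃, hx, h1, h2, h3⟩ := hB k
  rw [List.append_assoc] at hx
  rcases List.append_eq_append_iff.mp hx with ⟨t, ht1, ht2⟩ | ⟨t, ht1, ht2⟩
  · refine ⟨t, p₂, p₃, by rw [ht2, List.append_assoc], fun y hy => h1 y ?_, h2, h3⟩
    rw [ht1]; exact List.mem_append_right _ hy
  · have htA : ∀ y ∈ t, y = a := fun y hy => hL2 y (by rw [ht1]; exact List.mem_append_right _ hy)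
    rcases List.append_eq_append_iff.mp ht2.symm with ⟨u, hu1, hu2⟩ | ⟨u, hu1, hu2⟩
    · -- p₂ = t ++ u, l₃ = u ++ p₃
      have ht : t = [] := by
        cases t with
        | nil => rfl
        | cons b s =>
            have hb1 : b = a := htA b (by simp)
            have hb2 : b = k := h2 b (by rw [hu1]; exact List.mem_append_left _ (by simp))
            exact absurd (hb2 ▸ hb1 : k = a) hk
      subst ht
      simp only [List.nil_append] at hu1 hu2
      exact ⟨[], p₂, p₃, by simp [hu2, hu1], by simp, h2, h3⟩
    · -- t = p₂ ++ u, p₃ = u ++ l₃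
      refine ⟨l₃, [], [], by simp, fun y hy => h3 y ?_, by simp, by simp⟩
      rw [hu2]; exact List.mem_append_right _ hy

lemma chg_card {α : Type*} [DecidableEq α] :
    ∀ (n : ℕ) (xs : List α), xs.length ≤ n → xs ≠ [] → Blocky xs →
      chg xs + 1 = xs.toFinset.card := by
  intro n
  induction n with
  | zero =>
      intro xs hlen hne _
      cases xs with
      | nil => exact absurd rfl hne
      | cons a t => simp at hlen
  | succ n ih =>
      intro xs hlen hne hB
      obtain ⟨a, rest, rfl⟩ : ∃ a t, xs = a :: t := by
        cases xs with
        | nil => exact absurd rfl hne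
        | cons a t => exact ⟨a, t, rfl⟩
      obtain ⟨p₁, p₂, p₃, hx, h1, h2, h3⟩ := hB a
      have hp₁ : p₁ = [] := by
        cases p₁ with
        | nil => rfl
        | cons b s =>
            simp only [List.cons_append, List.cons.injEq] at hx
            exact absurd hx.1.symm (h1 b (by simp))
      subst hp₁
      simp only [List.nil_append] at hx
      obtain ⟨p₂', hp₂⟩ : ∃ p₂', p₂ = a :: p₂' := by
        cases p₂ with
        | nil =>
            simp only [List.nil_append] at hx
            have : a ∈ p₃ := by rw [← hx]; simp
            exact absurd rfl (h3 a this)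
        | cons b s =>
            simp only [List.cons_append, List.cons.injEq] at hx
            exact ⟨s, by rw [(h2 b (by simp) : b = a)]⟩
      subst hp₂
      simp only [List.cons_append, List.cons.injEq, true_and] at hx
      subst hx
      have hp₂' : ∀ y ∈ p₂', y = a := fun y hy => h2 y (by simp [hy])
      have hchg : chg (a :: (p₂' ++ p₃)) = chg (a :: p₃) := chg_const a p₃ p₂' hp₂'
      have hfin : (a :: (p₂' ++ p₃)).toFinset = insert a p₃.toFinset := by
        ext y
        simp only [List.toFinset_cons, List.toFinset_append, Finset.mem_insert,
          Finset.mem_union, List.mem_toFinset]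
        constructor
        · rintro (h | h | h)
          exacts [Or.inl h, Or.inl (hp₂' y h), Or.inr h]
        · rintro (h | h)
          exacts [Or.inl h, Or.inr (Or.inr h)]
      rw [hchg, hfin]
      cases p₃ with
      | nil => simp [chg]
      | cons b s =>
          have hba : ¬ (a = b) := fun h => (h3 b (by simp)) h.symm
          have hlen' : (b :: s).length ≤ n := by
            simp only [List.length_cons, List.length_append] at hlen ⊢
            omega
          have hBls : Blocky (b :: s) :=
            blocky_suffix a (a :: p₂') (b :: s)
              (by intro y hy; rcases List.mem_cons.mp hy with rfl | h
                  · rfl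
                  · exact hp₂' y h)
              h3 (by simpa using hB)
          have hrec := ih (b :: s) hlen' (by simp) hBls
          have hnm : a ∉ (b :: s).toFinset := by
            simp only [List.mem_toFinset]
            intro h; exact (h3 a h) rfl
          rw [Finset.card_insert_of_notMem hnm, ← hrec]
          simp [chg, hba]
          omega


/-- For every feasible CluVRP solution `s` with `m` routes and `N` clusters, the
penalized cost satisfies `c^M(s) = c(s) + M·(m + N)`; hence `s` minimizes `c^M`
over feasible CluVRP solutions iff it minimizes `c`. -/
theorem penalized_cost_constant_shift {C : Type*} [DecidableEq C] {N m : ℕ}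
    (Q : ℚ) (q : C → ℚ) (clu : C → Fin N) (hsurj : Function.Surjective clu)
    (c : Option C → Option C → ℝ) (M : ℝ) :
    (∀ routes : Fin m → List C, CluVRPFeasible Q q clu routes →
      solCost (penalizedCost clu c M) routes = solCost c routes + M * (m + N)) ∧
    (∀ routes : Fin m → List C, CluVRPFeasible Q q clu routes →
      ((∀ routes' : Fin m → List C, CluVRPFeasible Q q clu routes' →
          solCost (penalizedCost clu c M) routes ≤ solCost (penalizedCost clu c M) routes') ↔
       (∀ routes' : Fin m → List C, CluVRPFeasible Q q clu routes' →
          solCost c routes ≤ solCost c routes'))) := by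
  have key : ∀ routes : Fin m → List C, CluVRPFeasible Q q clu routes →
      solCost (penalizedCost clu c M) routes = solCost c routes + M * (m + N) := by
    intro routes hfeas
    obtain ⟨huniq, hnodup, hne, hcap, hcontig⟩ := hfeas
    -- the route containing each cluster
    have hroute : ∀ k : Fin N, ∃ i : Fin m,
        (∀ v, clu v = k → v ∈ routes i) ∧ (∀ j v, v ∈ routes j → clu v = k → j = i) := by
      intro k
      obtain ⟨i, l₁, l₂, l₃, hdec, hmem⟩ := hcontig k
      refine ⟨i, fun v hv => ?_, fun j v hvj hv => ?_⟩
      · rw [hdec]; exact List.mem_append_left _ (List.mem_append_right _ ((hmem v).mpr hv))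
      · have hvi : v ∈ routes i := by
          rw [hdec]; exact List.mem_append_left _ (List.mem_append_right _ ((hmem v).mpr hv))
        obtain ⟨i₀, _, hun⟩ := huniq v
        exact (hun j hvj).trans (hun i hvi).symm
    -- Blocky property for each route's cluster sequence
    have hblocky : ∀ i, Blocky ((routes i).map clu) := by
      intro i k
      obtain ⟨i₀, l₁, l₂, l₃, hdec, hmem⟩ := hcontig k
      by_cases hii : i = i₀
      · subst hii
        have hnd := hnodup i
        rw [hdec] at hnd
        refine ⟨l₁.map clu, l₂.map clu, l₃.map clu, by simp [hdec], ?_, ?_, ?_⟩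
        · rintro y hy
          obtain ⟨v, hv, rfl⟩ := List.mem_map.mp hy
          intro hk
          have hv2 : v ∈ l₂ := (hmem v).mpr hk
          have := (List.nodup_append'.mp ((List.append_assoc l₁ l₂ l₃) ▸ hnd)).2.2
          exact this hv (List.mem_append_left _ hv2)
        · rintro y hy
          obtain ⟨v, hv, rfl⟩ := List.mem_map.mp hy
          exact (hmem v).mp hv
        · rintro y hy
          obtain ⟨v, hv, rfl⟩ := List.mem_map.mp hy
          intro hk
          have hv2 : v ∈ l₂ := (hmem v).mpr hk
          exact (List.nodup_append'.mp hnd).2.2 (List.mem_append_right _ hv2) hv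
      · refine ⟨(routes i).map clu, [], [], by simp, ?_, by simp, by simp⟩
        rintro y hy
        obtain ⟨v, hv, rfl⟩ := List.mem_map.mp hy
        intro hk
        have hvi₀ : v ∈ routes i₀ := by
          rw [hdec]; exact List.mem_append_left _ (List.mem_append_right _ ((hmem v).mpr hk))
        obtain ⟨j₀, _, hun⟩ := huniq v
        exact hii ((hun i hv).trans (hun i₀ hvi₀).symm)
    -- per route: chg + 1 = number of clusters
    have hcc : ∀ i, chg ((routes i).map clu) + 1 = ((routes i).map clu).toFinset.card := by
      intro i
      exact chg_card ((routes i).map clu).length _ le_rfl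
        (by simp [hne i]) (hblocky i)
    -- the cluster finsets partition Fin N
    have hpart : ∑ i, ((routes i).map clu).toFinset.card = N := by
      classical
      have hdisj : ∀ i ∈ Finset.univ, ∀ j ∈ Finset.univ, i ≠ j →
          Disjoint ((routes i).map clu).toFinset ((routes j).map clu).toFinset := by
        intro i _ j _ hij
        rw [Finset.disjoint_left]
        intro k hki hkj
        obtain ⟨i₀, _, hun⟩ := hroute k
        obtain ⟨v, hv, hvk⟩ := List.mem_map.mp (List.mem_toFinset.mp hki)
        obtain ⟨w, hw, hwk⟩ := List.mem_map.mp (List.mem_toFinset.mp hkj)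
        exact hij ((hun i v hv hvk).trans (hun j w hw hwk).symm)
      have hcover : Finset.univ.biUnion (fun i => ((routes i).map clu).toFinset)
          = (Finset.univ : Finset (Fin N)) := by
        ext k
        simp only [Finset.mem_biUnion, Finset.mem_univ, true_and, iff_true]
        obtain ⟨i, hin, _⟩ := hroute k
        obtain ⟨v, hv⟩ := hsurj k
        exact ⟨i, List.mem_toFinset.mpr (List.mem_map.mpr ⟨v, hin v hv, hv⟩)⟩
      calc ∑ i, ((routes i).map clu).toFinset.card
          = (Finset.univ.biUnion (fun i => ((routes i).map clu).toFinset)).card :=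
            (Finset.card_biUnion hdisj).symm
        _ = N := by rw [hcover]; simp
    -- per-route cost identity
    have hper : ∀ i, routeCost (penalizedCost clu c M) (routes i)
        = routeCost c (routes i) + M * ((chg ((routes i).map clu) + 1 : ℕ) + 1) := by
      intro i
      unfold routeCost
      rw [pathCost_pen clu c M, pen_route clu (routes i) (hne i)]
      push_cast
      ring
    unfold solCost
    rw [Finset.sum_congr rfl (fun i _ => hper i), Finset.sum_add_distrib,
      ← Finset.mul_sum]
    have : ∑ i : Fin m, (((chg ((routes i).map clu) + 1 : ℕ) : ℝ) + 1)
        = (N : ℝ) + m := by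
      rw [Finset.sum_add_distrib]
      simp only [Finset.sum_const, Finset.card_univ, Fintype.card_fin, nsmul_eq_mul,
        mul_one]
      congr 1
      rw [← Nat.cast_sum]
      norm_cast
      rw [Finset.sum_congr rfl (fun i _ => hcc i), hpart]
    rw [this]
    ring
  refine ⟨key, fun routes hr => ?_⟩
  constructor
  · intro h routes' hr'
    have := h routes' hr'
    rw [key routes hr, key routes' hr'] at this
    linarith
  · intro h routes' hr'
    have := h routes' hr'
    rw [key routes hr, key routes' hr']
    linarith
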